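/- (Strong duality for the geometric relaxation.) Assume f̃ = ∑_j f̃_j with each f̃_j lower semicontinuous and convex, dom(f̃) containing a neighborhood of conv(𝒴), and conv(𝒴) closed. Then 𝒥* = sup_{λ∈E} ( −f̃*(λ) + (1/N)∑_{i=1}^N Φ_i(λ) ), where Φ_i(λ) = inf_{x_i∈X_i} ⟨λ, g̃_i(x_i)⟩, and the supremum is attained. Moreover, given a dual maximizer λ, a point y is a minimizer of f̃ over conv(𝒴) if and only if y ∈ ∂f̃*(λ) and y ∈ (1/N)∑_i conv(𝒴_i(λ)), where 𝒴_i(λ) = argmin_{y_i∈𝒴_i}⟨λ, y_i⟩. -/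

import Mathlib

open Finset Pointwise
open scoped RealInnerProductSpace

set_option linter.unusedSectionVars false
set_option maxHeartbeats 1000000
set_option synthInstance.maxHeartbeats 1000000

/-- A finitely supported probability measure, encoded as a `Finsupp` of weights. -/
def IsFinProb {Ω : Type*} (μ : Ω →₀ ℝ) : Prop :=
  (∀ x, 0 ≤ μ x) ∧ μ.sum (fun _ w => w) = 1

section Aux
variable {F : Type*} [NormedAddCommGroup F] [InnerProductSpace ℝ F] [CompleteSpace F]

private lemma inner_bdd_above_zero {μ : F} {u : ℝ} (h : ∀ z, ⟪μ, z⟫ ≤ u) : μ = 0 := by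
  by_contra hμ
  have h1 : (0:ℝ) < ⟪μ, μ⟫ := by
    rw [real_inner_self_eq_norm_sq]
    exact pow_pos (norm_pos_iff.2 hμ) 2
  have h0 : ⟪μ, μ⟫ ≠ 0 := h1.ne'
  have h2 := h (((u + 1) / ⟪μ, μ⟫) • μ)
  rw [real_inner_smul_right, div_mul_cancel₀ _ h0] at h2
  linarith

private lemma decomp_functional (φ : (F × ℝ) →L[ℝ] ℝ) :
    ∃ μ : F, ∀ z s, φ (z, s) = ⟪μ, z⟫ + s * φ (0, 1) := by
  refine ⟨(InnerProductSpace.toDual ℝ F).symm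
    (φ.comp (ContinuousLinearMap.inl ℝ F ℝ)), fun z s => ?_⟩
  rw [InnerProductSpace.toDual_symm_apply]
  have h1 : ((z, s) : F × ℝ) = (z, 0) + (0, s) := by simp
  have h2 : ((0:F), s) = s • ((0:F), (1:ℝ)) := by simp
  rw [h1, map_add, h2, map_smul, smul_eq_mul]
  simp [ContinuousLinearMap.comp_apply]

private lemma div_aux1 {A c b u : ℝ} (hb : 0 < b) (h : A - c * b ≤ u) :
    b⁻¹ * A - c ≤ u / b := by
  rw [div_eq_mul_inv]
  have h2 := mul_le_mul_of_nonneg_right h (inv_nonneg.2 hb.le)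
  have h4 : (A - c * b) * b⁻¹ = b⁻¹ * A - c := by field_simp
  linarith

private lemma div_aux2 {A c b u : ℝ} (hb : 0 < b) (h : u < A - c * b) :
    u / b < b⁻¹ * A - c := by
  rw [div_eq_mul_inv]
  have h2 := mul_lt_mul_of_pos_right h (inv_pos.2 hb)
  have h4 : (A - c * b) * b⁻¹ = b⁻¹ * A - c := by field_simp
  linarith

private lemma div_aux3 {A c b u : ℝ} (hb : 0 < b) (h : u ≤ A - c * b) :
    u / b + c ≤ b⁻¹ * A := by
  have := div_aux1 hb (by linarith : (A : ℝ) - c * b ≤ A - c * b)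
  have h2 := mul_le_mul_of_nonneg_right h (inv_nonneg.2 hb.le)
  have h4 : (A - c * b) * b⁻¹ = b⁻¹ * A - c := by field_simp
  rw [div_eq_mul_inv]
  linarith

private lemma lsc_epi_closed {f : F → ℝ} (h : LowerSemicontinuous f) :
    IsClosed {p : F × ℝ | f p.1 ≤ p.2} := by
  rw [← isOpen_compl_iff, isOpen_iff_mem_nhds]
  rintro ⟨z, s⟩ hzs
  simp only [Set.mem_compl_iff, Set.mem_setOf_eq, not_le] at hzs
  obtain ⟨c, hc1, hc2⟩ := exists_between hzs
  have h1 : {x : F | c < f x} ∈ nhds z := h z c hc2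
  have h2 : Set.Iio c ∈ nhds s := Iio_mem_nhds hc1
  rw [nhds_prod_eq]
  apply Filter.mem_of_superset (Filter.prod_mem_prod h1 h2)
  rintro ⟨x, r⟩ ⟨hx, hr⟩
  simp only [Set.mem_compl_iff, Set.mem_setOf_eq, not_le]
  exact lt_trans (Set.mem_Iio.1 hr) hx

private lemma epi_convex {f : F → ℝ} (hcv : ConvexOn ℝ Set.univ f) :
    Convex ℝ {p : F × ℝ | f p.1 ≤ p.2} := by
  have h := hcv.convex_epigraph
  simpa using h

/-- Lemma A: existence of strict affine minorants below the value of a lsc convex function. -/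
private lemma exists_affine_minorant {f : F → ℝ} (hlsc : LowerSemicontinuous f)
    (hcv : ConvexOn ℝ Set.univ f) {y : F} {t : ℝ} (ht : t < f y) :
    ∃ (μ : F) (c : ℝ), (∀ z, ⟪μ, z⟫ - f z ≤ c) ∧ t < ⟪μ, y⟫ - c := by
  have hepi_cl : IsClosed {p : F × ℝ | f p.1 ≤ p.2} := lsc_epi_closed hlsc
  have hy : ((y, t) : F × ℝ) ∉ {p : F × ℝ | f p.1 ≤ p.2} := by
    simp only [Set.mem_setOf_eq, not_le]; exact ht
  obtain ⟨φ, u, hsep, hpt⟩ := geometric_hahn_banach_closed_point (epi_convex hcv) hepi_cl hy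
  obtain ⟨μ', hφ⟩ := decomp_functional φ
  set β := φ (0, 1) with hβdef
  have hepiIneq : ∀ z s, f z ≤ s → ⟪μ', z⟫ + s * β < u := by
    intro z s hs
    have := hsep (z, s) hs
    rwa [hφ] at this
  have hptIneq : u < ⟪μ', y⟫ + t * β := by
    have := hpt; rwa [hφ] at this
  -- β ≤ 0
  have hβle : β ≤ 0 := by
    by_contra hc
    push_neg at hc
    obtain ⟨n, hn⟩ := exists_nat_gt (u / β - f 0)
    have h1 := hepiIneq 0 (f 0 + n) (by linarith [Nat.cast_nonneg (α := ℝ) n])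
    rw [inner_zero_right] at h1
    have h2 : u / β < f 0 + n := by linarith
    have h3 : u < (f 0 + n) * β := (div_lt_iff₀ hc).mp h2
    linarith
  -- β ≠ 0
  have hβne : β ≠ 0 := by
    intro h0
    have hμ0 : μ' = 0 := by
      apply inner_bdd_above_zero (u := u)
      intro z
      have := hepiIneq z (f z) le_rfl
      rw [h0] at this; linarith
    rw [hμ0, h0] at hptIneq
    have := hepiIneq y (f y) le_rfl
    rw [hμ0, h0] at this
    simp only [inner_zero_left, mul_zero, add_zero, zero_add] at hptIneq this
    linarith
  have hb : 0 < -β := by cases' hβle.lt_or_eq with h h; · linarith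
                         · exact absurd h hβne
  refine ⟨(-β)⁻¹ • μ', u / (-β), fun z => ?_, ?_⟩
  · have h1 := hepiIneq z (f z) le_rfl
    have h2 : ⟪μ', z⟫ - f z * (-β) ≤ u := by linarith
    have := div_aux1 hb h2
    rwa [real_inner_smul_left]
  · have h2 : u < ⟪μ', y⟫ - t * (-β) := by linarith
    have := div_aux2 hb h2
    rw [real_inner_smul_left]
    linarith

/-- Lemma C: the epigraph of a real-valued lsc function on a complete space has
nonempty interior (Baire). -/
private lemma epi_interior_nonempty {f : F → ℝ} (hlsc : LowerSemicontinuous f) :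
    (interior {p : F × ℝ | f p.1 ≤ p.2}).Nonempty := by
  haveI : Nonempty F := ⟨0⟩
  set S : ℕ → Set F := fun n => f ⁻¹' Set.Iic (n : ℝ) with hSdef
  have hcl : ∀ n : ℕ, IsClosed (S n) := fun n => hlsc.isClosed_preimage (n : ℝ)
  have hU : (⋃ n : ℕ, S n) = Set.univ := by
    apply Set.eq_univ_iff_forall.2
    intro y
    refine Set.mem_iUnion.2 ⟨⌈f y⌉₊, ?_⟩
    simp only [hSdef, Set.mem_preimage, Set.mem_Iic]
    exact Nat.le_ceil _
  obtain ⟨n, y₀, hy₀⟩ := nonempty_interior_of_iUnion_of_closed hcl hU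
  refine ⟨(y₀, (n : ℝ) + 1), ?_⟩
  have hsub : (interior (S n)) ×ˢ Set.Ioi (n : ℝ) ⊆ {p : F × ℝ | f p.1 ≤ p.2} := by
    rintro ⟨z, s⟩ ⟨hz, hs⟩
    have h1 : z ∈ S n := interior_subset hz
    have h2 : f z ≤ (n : ℝ) := Set.mem_Iic.1 (Set.mem_preimage.1 h1)
    exact le_trans h2 (le_of_lt hs)
  have hopen : IsOpen ((interior (S n)) ×ˢ Set.Ioi (n : ℝ)) :=
    isOpen_interior.prod isOpen_Ioi
  apply interior_maximal hsub hopen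
  exact Set.mem_prod.2 ⟨hy₀, by simp⟩

/-- Lemma B: strong separation giving the dual optimum. -/
private lemma strong_sep {f : F → ℝ} (hcv : ConvexOn ℝ Set.univ f)
    (hint : (interior {p : F × ℝ | f p.1 ≤ p.2}).Nonempty)
    {C : Set F} (hC : Convex ℝ C) (hCne : C.Nonempty) (hbb : BddBelow (f '' C)) :
    ∃ (μ : F) (c : ℝ), (∀ z, ⟪μ, z⟫ - f z ≤ c) ∧
      ∀ y ∈ C, c + sInf (f '' C) ≤ ⟪μ, y⟫ := by
  set epi : Set (F × ℝ) := {p : F × ℝ | f p.1 ≤ p.2} with hepidef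
  set J := sInf (f '' C) with hJdef
  set B : Set (F × ℝ) := C ×ˢ Set.Iic J with hBdef
  have hBcv : Convex ℝ B := hC.prod (convex_Iic J)
  obtain ⟨y₀, hy₀⟩ := hCne
  have hBne : ((y₀, J) : F × ℝ) ∈ B := Set.mem_prod.2 ⟨hy₀, Set.mem_Iic.2 le_rfl⟩
  have hdisj : Disjoint (interior epi) B := by
    rw [Set.disjoint_left]
    rintro ⟨z, s⟩ hzs ⟨hzC, hsJ⟩
    rw [mem_interior_iff_mem_nhds, Metric.mem_nhds_iff] at hzs
    obtain ⟨ε, hε, hball⟩ := hzs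
    have hmem : ((z, s - ε / 2) : F × ℝ) ∈ Metric.ball ((z, s) : F × ℝ) ε := by
      rw [Metric.mem_ball, Prod.dist_eq, dist_self]
      have hd : dist (s - ε / 2) s = ε / 2 := by
        rw [Real.dist_eq, show s - ε / 2 - s = -(ε / 2) by ring, abs_neg,
          abs_of_pos (by linarith)]
      rw [hd, max_eq_right (by linarith)]
      linarith
    have h1 : f z ≤ s - ε / 2 := hball hmem
    have h2 : J ≤ f z := csInf_le hbb ⟨z, hzC, rfl⟩
    simp only [Set.mem_Iic] at hsJ
    linarith
  obtain ⟨φ, u, hsep, hsep2⟩ :=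
    geometric_hahn_banach_open ((epi_convex hcv).interior) isOpen_interior hBcv hdisj
  -- extend the strict inequality to all of epi
  obtain ⟨e, he⟩ := hint
  have hext : ∀ a ∈ epi, φ a ≤ u := by
    intro a ha
    have hseq : ∀ n : ℕ, a + ((n : ℝ) + 1)⁻¹ • (e - a) ∈ interior epi := by
      intro n
      apply (epi_convex hcv).add_smul_sub_mem_interior ha he
      constructor
      · positivity
      · rw [inv_le_one_iff₀]
        right; linarith [Nat.cast_nonneg (α := ℝ) n]
    have htend : Filter.Tendsto (fun n : ℕ => a + ((n : ℝ) + 1)⁻¹ • (e - a))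
        Filter.atTop (nhds a) := by
      have h0 : Filter.Tendsto (fun n : ℕ => ((n : ℝ) + 1)⁻¹) Filter.atTop (nhds 0) := by
        simpa [one_div] using tendsto_one_div_add_atTop_nhds_zero_nat (𝕜 := ℝ)
      have := Filter.Tendsto.smul_const h0 (e - a)
      have h2 := Filter.Tendsto.const_add a this
      simpa using h2
    have hφt : Filter.Tendsto (fun n : ℕ => φ (a + ((n : ℝ) + 1)⁻¹ • (e - a)))
        Filter.atTop (nhds (φ a)) := (φ.continuous.tendsto a).comp htend
    exact le_of_tendsto hφt (Filter.Eventually.of_forall fun n => (hsep _ (hseq n)).le)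
  obtain ⟨μ', hφ⟩ := decomp_functional φ
  set β := φ (0, 1) with hβdef
  have hepiIneq : ∀ z s, f z ≤ s → ⟪μ', z⟫ + s * β ≤ u := by
    intro z s hs
    have := hext (z, s) hs
    rwa [hφ] at this
  have hβle : β ≤ 0 := by
    by_contra hc
    push_neg at hc
    obtain ⟨n, hn⟩ := exists_nat_gt (u / β - f 0)
    have h1 := hepiIneq 0 (f 0 + n) (by linarith [Nat.cast_nonneg (α := ℝ) n])
    rw [inner_zero_right] at h1
    have h2 : u / β < f 0 + n := by linarith
    have h3 : u < (f 0 + n) * β := (div_lt_iff₀ hc).mp h2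
    linarith
  have hβne : β ≠ 0 := by
    intro h0
    have hμ0 : μ' = 0 := by
      apply inner_bdd_above_zero (u := u)
      intro z
      have := hepiIneq z (f z) le_rfl
      rw [h0] at this; linarith
    have h1 := hsep e he
    have h2 := hsep2 _ hBne
    rw [hφ] at h1 h2
    rw [hμ0, h0] at h1 h2
    simp only [inner_zero_left, mul_zero, add_zero, zero_add] at h1 h2
    linarith
  have hb : 0 < -β := by
    cases' hβle.lt_or_eq with h h
    · linarith
    · exact absurd h hβne
  refine ⟨(-β)⁻¹ • μ', u / (-β), fun z => ?_, fun y hy => ?_⟩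
  · have h1 := hepiIneq z (f z) le_rfl
    have h2 : ⟪μ', z⟫ - f z * (-β) ≤ u := by linarith
    have := div_aux1 hb h2
    rwa [real_inner_smul_left]
  · have h1 := hsep2 (y, J) (Set.mem_prod.2 ⟨hy, Set.mem_Iic.2 le_rfl⟩)
    rw [hφ] at h1
    have h2 : u ≤ ⟪μ', y⟫ - J * (-β) := by linarith
    have := div_aux3 hb h2
    rw [real_inner_smul_left]
    linarith


private lemma convexOn_finsum {ι : Type*} {s : Finset ι} {f : ι → F → ℝ}
    (h : ∀ i ∈ s, ConvexOn ℝ Set.univ (f i)) :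
    ConvexOn ℝ Set.univ (fun x => ∑ i ∈ s, f i x) := by
  classical
  induction s using Finset.induction_on with
  | empty => simpa using convexOn_const (0 : ℝ) convex_univ
  | @insert i t hi ih =>
      have h1 : ConvexOn ℝ Set.univ (f i) := h i (Finset.mem_insert_self i t)
      have h2 := ih fun j hj => h j (Finset.mem_insert_of_mem hj)
      have := h1.add h2
      simp only [Finset.sum_insert hi]; exact this

private lemma isLinearMap_inner (p : F) : IsLinearMap ℝ (fun z : F => ⟪p, z⟫) :=
  ⟨fun x y => inner_add_right p x y, fun c x => real_inner_smul_right p x c⟩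

/-- Lemma D: a point of the convex hull where a linear functional attains its
lower bound lies in the convex hull of the argmin set. -/
private lemma mem_convexHull_face {s : Set F} {μ : F} {m : ℝ}
    (hlb : ∀ z ∈ s, m ≤ ⟪μ, z⟫) {y : F} (hy : y ∈ convexHull ℝ s) (hub : ⟪μ, y⟫ ≤ m) :
    y ∈ convexHull ℝ {z | z ∈ s ∧ ⟪μ, z⟫ ≤ m} := by
  classical
  rw [_root_.convexHull_eq] at hy
  obtain ⟨ι, t, w, z, hw0, hw1, hz, hyeq⟩ := hy
  have hcm : t.centerMass w z = ∑ i ∈ t, w i • z i :=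
    Finset.centerMass_eq_of_sum_1 t z hw1
  have hinner : ⟪μ, y⟫ = ∑ i ∈ t, w i * ⟪μ, z i⟫ := by
    rw [← hyeq, hcm, inner_sum]
    congr 1
    ext i
    rw [real_inner_smul_right]
  have hkey : ∀ i ∈ t, w i ≠ 0 → ⟪μ, z i⟫ ≤ m := by
    by_contra hc
    push_neg at hc
    obtain ⟨i₀, hi₀t, hwi₀, hgt⟩ := hc
    have hlt : ∑ i ∈ t, w i * m < ∑ i ∈ t, w i * ⟪μ, z i⟫ := by
      apply Finset.sum_lt_sum
      · intro i hi
        exact mul_le_mul_of_nonneg_left (hlb _ (hz i hi)) (hw0 i hi)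
      · refine ⟨i₀, hi₀t, ?_⟩
        exact mul_lt_mul_of_pos_left hgt (lt_of_le_of_ne (hw0 i₀ hi₀t) (Ne.symm hwi₀))
    rw [← Finset.sum_mul, hw1, one_mul] at hlt
    rw [hinner] at hub
    linarith
  have hmem : ∀ i ∈ t.filter (fun i => w i ≠ 0), z i ∈ {z | z ∈ s ∧ ⟪μ, z⟫ ≤ m} := by
    intro i hi
    rw [Finset.mem_filter] at hi
    exact ⟨hz i hi.1, hkey i hi.1 hi.2⟩
  have hsumpos : 0 < ∑ i ∈ t.filter (fun i => w i ≠ 0), w i := by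
    rw [Finset.sum_filter_ne_zero, hw1]
    norm_num
  have := Finset.centerMass_mem_convexHull (t.filter (fun i => w i ≠ 0))
    (fun i hi => hw0 i (Finset.mem_filter.1 hi).1) hsumpos hmem
  rwa [Finset.centerMass_filter_ne_zero, hyeq] at this

end Aux

/-- strong duality for the geometric relaxation, attainment of the
dual problem, and characterization of the minimizers of `f̃` over `conv(𝒴)`. -/
theorem strong_duality_geometric_relaxation
    {N M : ℕ} (hN : 0 < N)
    {X : Fin N → Type*} [∀ i, Nonempty (X i)]
    {E : Fin M → Type*}
    [∀ j, NormedAddCommGroup (E j)] [∀ j, InnerProductSpace ℝ (E j)]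
    [∀ j, CompleteSpace (E j)]
    (gt : ∀ i, X i → PiLp 2 E)
    (fj : ∀ j, E j → ℝ)
    (hlsc : ∀ j, LowerSemicontinuous (fj j))
    (hconv : ∀ j, ConvexOn ℝ Set.univ (fj j))
    (hbdd : ∀ i, Bornology.IsBounded (Set.range (gt i)))
    (hclosed : IsClosed (convexHull ℝ
      ((N : ℝ)⁻¹ • ∑ i, Set.range (gt i) : Set (PiLp 2 E)))) :
    -- notation
    let ft : PiLp 2 E → ℝ := fun y => ∑ j, fj j (y j)
    let Ytot : Set (PiLp 2 E) := (N : ℝ)⁻¹ • ∑ i, Set.range (gt i)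
    let Jr : ℝ := sInf (ft '' convexHull ℝ Ytot)
    let fstar : PiLp 2 E → EReal := fun p => ⨆ y : PiLp 2 E, ((⟪p, y⟫ - ft y : ℝ) : EReal)
    let Phi : ∀ i, PiLp 2 E → ℝ := fun i p => sInf (Set.range fun xi : X i => ⟪p, gt i xi⟫)
    let dualVal : PiLp 2 E → EReal :=
      fun p => -(fstar p) + (((N : ℝ)⁻¹ * ∑ i, Phi i p : ℝ) : EReal)
    -- strong duality with dual attainment
    (∃ lam : PiLp 2 E, dualVal lam = (Jr : EReal) ∧ ∀ p, dualVal p ≤ (Jr : EReal)) ∧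
    -- characterization of the primal minimizers, given any dual maximizer
    (∀ lam : PiLp 2 E, dualVal lam = (Jr : EReal) →
      ∀ y : PiLp 2 E,
        (y ∈ convexHull ℝ Ytot ∧ ft y = Jr) ↔
          ((∀ p : PiLp 2 E, fstar lam + ((⟪y, p - lam⟫ : ℝ) : EReal) ≤ fstar p) ∧
            y ∈ ((N : ℝ)⁻¹ • ∑ i, convexHull ℝ
              {yi | yi ∈ Set.range (gt i) ∧
                ∀ z ∈ Set.range (gt i), ⟪lam, yi⟫ ≤ ⟪lam, z⟫} : Set (PiLp 2 E)))) := by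
  classical
  haveI : CompleteSpace (PiLp 2 E) := inferInstance
  intro ft Ytot Jr fstar Phi dualVal
  have hft_def : ft = fun y => ∑ j, fj j (y j) := rfl
  have hfstar_def : fstar = fun p => ⨆ y : PiLp 2 E, ((⟪p, y⟫ - ft y : ℝ) : EReal) := rfl
  have hPhi_def : Phi = fun i p => sInf (Set.range fun xi : X i => ⟪p, gt i xi⟫) := rfl
  have hdualVal_def : ∀ p, dualVal p =
      -(fstar p) + (((N : ℝ)⁻¹ * ∑ i, Phi i p : ℝ) : EReal) := fun _ => rfl
  set C : Set (PiLp 2 E) := convexHull ℝ Ytot with hCdef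
  have hJr_def : Jr = sInf (ft '' C) := rfl
  have hNinv : (0 : ℝ) < (N : ℝ)⁻¹ := by
    have : (0 : ℝ) < (N : ℝ) := by exact_mod_cast hN
    positivity
  have hNne : (N : ℝ) ≠ 0 := by positivity
  -- continuity of coordinate projections
  have hproj : ∀ j, Continuous fun y : PiLp 2 E => y j :=
    fun j => (PiLp.proj (𝕜 := ℝ) (p := 2) (β := E) j).continuous
  have hft_lsc : LowerSemicontinuous ft := by
    rw [hft_def]
    exact lowerSemicontinuous_sum fun j _ => LowerSemicontinuous.comp (hlsc j) (hproj j)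
  have hft_cv : ConvexOn ℝ Set.univ ft := by
    rw [hft_def]
    apply convexOn_finsum
    intro j _
    have h := (hconv j).comp_affineMap
      ((PiLp.projₗ (p := 2) (𝕜 := ℝ) (β := E) j).toAffineMap)
    exact h
  have hCcv : Convex ℝ C := convex_convexHull ℝ Ytot
  have hAne : ∀ i, (Set.range (gt i)).Nonempty := fun i => Set.range_nonempty _
  -- bddBelow of the inner-product images
  have hRbb : ∀ (i : Fin N) (p : PiLp 2 E),
      BddBelow (Set.range fun xi : X i => ⟪p, gt i xi⟫) := by
    intro i p
    obtain ⟨R, hR⟩ := Bornology.IsBounded.exists_norm_le (hbdd i)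
    refine ⟨-(‖p‖ * R), ?_⟩
    rintro v ⟨xi, rfl⟩
    have h1 : |⟪p, gt i xi⟫| ≤ ‖p‖ * ‖gt i xi‖ := abs_real_inner_le_norm _ _
    have h2 : ‖p‖ * ‖gt i xi‖ ≤ ‖p‖ * R :=
      mul_le_mul_of_nonneg_left (hR _ ⟨xi, rfl⟩) (norm_nonneg p)
    have h3 := neg_abs_le ⟪p, gt i xi⟫
    simp only [Set.mem_Ici]
    linarith
  have hPhi_le : ∀ (i : Fin N) (p : PiLp 2 E) (xi : X i), Phi i p ≤ ⟪p, gt i xi⟫ := by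
    intro i p xi
    rw [hPhi_def]
    exact csInf_le (hRbb i p) ⟨xi, rfl⟩
  have hPhi_lb : ∀ (i : Fin N) (p : PiLp 2 E),
      ∀ z ∈ convexHull ℝ (Set.range (gt i)), Phi i p ≤ ⟪p, z⟫ := by
    intro i p
    have hsub : Set.range (gt i) ⊆ {w : PiLp 2 E | Phi i p ≤ ⟪p, w⟫} := by
      rintro z ⟨xi, rfl⟩
      exact hPhi_le i p xi
    have hcv : Convex ℝ {w : PiLp 2 E | Phi i p ≤ ⟪p, w⟫} :=
      convex_halfSpace_ge (isLinearMap_inner p) (Phi i p)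
    intro z hz
    exact convexHull_min hsub hcv hz
  have hCdecomp : C = (N : ℝ)⁻¹ • ∑ i, convexHull ℝ (Set.range (gt i)) := by
    rw [hCdef]
    show convexHull ℝ ((N : ℝ)⁻¹ • ∑ i, Set.range (gt i)) = _
    rw [convexHull_smul, convexHull_sum]
  have hinner_smul_sum : ∀ (p : PiLp 2 E) (g : Fin N → PiLp 2 E),
      ⟪p, (N : ℝ)⁻¹ • ∑ i, g i⟫ = (N : ℝ)⁻¹ * ∑ i, ⟪p, g i⟫ := by
    intro p g
    rw [real_inner_smul_right, inner_sum]
  -- the fundamental lower bound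
  have hLB : ∀ (p : PiLp 2 E), ∀ y ∈ C, (N : ℝ)⁻¹ * ∑ i, Phi i p ≤ ⟪p, y⟫ := by
    intro p y hy
    rw [hCdecomp] at hy
    obtain ⟨w, hw, rfl⟩ := hy
    obtain ⟨g, hg, rfl⟩ := (Set.mem_fintype_sum _ _).1 hw
    rw [hinner_smul_sum]
    apply mul_le_mul_of_nonneg_left _ hNinv.le
    exact Finset.sum_le_sum fun i _ => hPhi_lb i p _ (hg i)
  -- nonemptiness of C
  have hYmem : ∀ x : ∀ i, X i, (N : ℝ)⁻¹ • ∑ i, gt i (x i) ∈ Ytot := by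
    intro x
    exact Set.smul_mem_smul_set
      (Set.finset_sum_mem_finset_sum Finset.univ _ _ fun i _ => ⟨x i, rfl⟩)
  have hCne : C.Nonempty := by
    refine ⟨(N : ℝ)⁻¹ • ∑ i, gt i (Classical.arbitrary (X i)), ?_⟩
    exact subset_convexHull ℝ Ytot (hYmem _)
  -- BddBelow of ft '' C via an affine minorant
  have hbbC : BddBelow (ft '' C) := by
    obtain ⟨μ₀, c₀, hmin, _⟩ := exists_affine_minorant hft_lsc hft_cv
      (y := 0) (t := ft 0 - 1) (by linarith)
    refine ⟨(N : ℝ)⁻¹ * ∑ i, Phi i μ₀ - c₀, ?_⟩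
    rintro v ⟨z, hz, rfl⟩
    have h1 := hmin z
    have h2 := hLB μ₀ z hz
    linarith
  have hJr_le : ∀ y ∈ C, Jr ≤ ft y := by
    intro y hy
    rw [hJr_def]
    exact csInf_le hbbC ⟨y, hy, rfl⟩
  -- EReal helpers
  have hcoe : ∀ a s : ℝ, -(a : EReal) + (s : EReal) = ((s - a : ℝ) : EReal) := by
    intro a s
    rw [sub_eq_neg_add, EReal.coe_add, EReal.coe_neg]
  have hFY : ∀ (p y : PiLp 2 E), ((⟪p, y⟫ - ft y : ℝ) : EReal) ≤ fstar p := by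
    intro p y
    rw [hfstar_def]
    exact le_iSup (fun y => ((⟪p, y⟫ - ft y : ℝ) : EReal)) y
  have hFle : ∀ (p : PiLp 2 E) (c : ℝ), (∀ y, ⟪p, y⟫ - ft y ≤ c) → fstar p ≤ (c : EReal) := by
    intro p c h
    rw [hfstar_def]
    exact iSup_le fun y => EReal.coe_le_coe_iff.2 (h y)
  have hfstar_ne_bot : ∀ p, fstar p ≠ ⊥ := by
    intro p hbot
    have h := hFY p 0
    rw [hbot, le_bot_iff] at h
    exact EReal.coe_ne_bot _ h
  -- weak duality
  have hweak : ∀ p, dualVal p ≤ (Jr : EReal) := by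
    intro p
    rw [hdualVal_def]
    by_cases htop : fstar p = ⊤
    · rw [htop]
      simp [EReal.neg_top, EReal.bot_add]
    · have hr : fstar p = ((fstar p).toReal : EReal) :=
        (EReal.coe_toReal htop (hfstar_ne_bot p)).symm
      set r := (fstar p).toReal
      rw [hr, hcoe, EReal.coe_le_coe_iff]
      rw [hJr_def]
      apply le_csInf (hCne.image ft)
      rintro v ⟨z, hz, rfl⟩
      have h1 : ((⟪p, z⟫ - ft z : ℝ) : EReal) ≤ (r : EReal) := by
        rw [← hr]; exact hFY p z
      have h2 := EReal.coe_le_coe_iff.1 h1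
      have h3 := hLB p z hz
      linarith
  -- dual attainment
  obtain ⟨μ, c, hμ1, hμ2⟩ := strong_sep hft_cv (epi_interior_nonempty hft_lsc) hCcv hCne hbbC
  have hfsμ_le : fstar μ ≤ (c : EReal) := hFle μ c hμ1
  have hμtop : fstar μ ≠ ⊤ := by
    intro h
    rw [h] at hfsμ_le
    exact (EReal.coe_lt_top c).not_ge hfsμ_le
  have hrμ : fstar μ = ((fstar μ).toReal : EReal) :=
    (EReal.coe_toReal hμtop (hfstar_ne_bot μ)).symm
  set rμ := (fstar μ).toReal with hrμdef
  have hrμc : rμ ≤ c := by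
    rw [hrμ] at hfsμ_le
    exact EReal.coe_le_coe_iff.1 hfsμ_le
  have hS_ge : c + Jr ≤ (N : ℝ)⁻¹ * ∑ i, Phi i μ := by
    by_contra hcon
    push_neg at hcon
    set ε := (c + Jr - (N : ℝ)⁻¹ * ∑ i, Phi i μ) / 2 with hεdef
    have hε : 0 < ε := by
      rw [hεdef]; linarith
    have hchoice : ∀ i : Fin N, ∃ xi : X i, ⟪μ, gt i xi⟫ < Phi i μ + ε := by
      intro i
      obtain ⟨a, ha, halt⟩ := Real.lt_sInf_add_pos
        (Set.range_nonempty (fun xi : X i => ⟪μ, gt i xi⟫)) hε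
      obtain ⟨xi, rfl⟩ := ha
      refine ⟨xi, ?_⟩
      rw [hPhi_def]
      exact halt
    choose x hx using hchoice
    have hyC : (N : ℝ)⁻¹ • ∑ i, gt i (x i) ∈ C := subset_convexHull ℝ Ytot (hYmem x)
    have h1 := hμ2 _ hyC
    rw [hinner_smul_sum] at h1
    have h2 : ∑ i, ⟪μ, gt i (x i)⟫ ≤ ∑ i : Fin N, (Phi i μ + ε) :=
      Finset.sum_le_sum fun i _ => (hx i).le
    have h3 : ∑ i : Fin N, (Phi i μ + ε) = (∑ i, Phi i μ) + N * ε := by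
      rw [Finset.sum_add_distrib]
      congr 1
      rw [Finset.sum_const, Finset.card_univ, Fintype.card_fin, nsmul_eq_mul]
    have h4 : (N : ℝ)⁻¹ * ∑ i, ⟪μ, gt i (x i)⟫ ≤
        (N : ℝ)⁻¹ * ((∑ i, Phi i μ) + N * ε) := by
      apply mul_le_mul_of_nonneg_left _ hNinv.le
      rw [← h3]; exact h2
    have h5 : (N : ℝ)⁻¹ * ((∑ i, Phi i μ) + N * ε) =
        (N : ℝ)⁻¹ * (∑ i, Phi i μ) + ε := by
      field_simp
    have h6 : c + sInf (ft '' C) ≤ (N : ℝ)⁻¹ * (∑ i, Phi i μ) + ε := by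
      calc c + sInf (ft '' C) ≤ (N : ℝ)⁻¹ * ∑ i, ⟪μ, gt i (x i)⟫ := h1
        _ ≤ (N : ℝ)⁻¹ * ((∑ i, Phi i μ) + N * ε) := h4
        _ = (N : ℝ)⁻¹ * (∑ i, Phi i μ) + ε := h5
    rw [← hJr_def] at h6
    rw [hεdef] at h6
    linarith
  have hda : dualVal μ = (Jr : EReal) := by
    apply le_antisymm (hweak μ)
    rw [hdualVal_def, hrμ, hcoe, EReal.coe_le_coe_iff]
    linarith
  refine ⟨⟨μ, hda, hweak⟩, ?_⟩
  -- Part 2 : characterization of primal minimizers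
  intro lam hlam y
  have hlam_ne_top : fstar lam ≠ ⊤ := by
    intro h
    rw [hdualVal_def, h] at hlam
    rw [EReal.neg_top, EReal.bot_add] at hlam
    exact (EReal.bot_ne_coe Jr) hlam
  have hrlam : fstar lam = ((fstar lam).toReal : EReal) :=
    (EReal.coe_toReal hlam_ne_top (hfstar_ne_bot lam)).symm
  set r := (fstar lam).toReal with hrdef
  set S := (N : ℝ)⁻¹ * ∑ i, Phi i lam with hSdef
  have hSr : S - r = Jr := by
    rw [hdualVal_def, hrlam, hcoe] at hlam
    exact EReal.coe_eq_coe_iff.1 hlam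
  -- the argmin sets
  have hMi_eq : ∀ i : Fin N,
      {yi : PiLp 2 E | yi ∈ Set.range (gt i) ∧
        ∀ z ∈ Set.range (gt i), ⟪lam, yi⟫ ≤ ⟪lam, z⟫} =
      {z : PiLp 2 E | z ∈ Set.range (gt i) ∧ ⟪lam, z⟫ ≤ Phi i lam} := by
    intro i
    ext z
    simp only [Set.mem_setOf_eq]
    constructor
    · rintro ⟨hz, hall⟩
      refine ⟨hz, ?_⟩
      rw [hPhi_def]
      apply le_csInf (Set.range_nonempty _)
      rintro b ⟨xi, rfl⟩
      exact hall _ ⟨xi, rfl⟩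
    · rintro ⟨hz, hle⟩
      refine ⟨hz, ?_⟩
      rintro z' ⟨xi', rfl⟩
      exact le_trans hle (hPhi_le i lam xi')
  constructor
  · -- forward direction
    rintro ⟨hyC, hfy⟩
    have h1 : ⟪lam, y⟫ - ft y ≤ r := by
      have := hFY lam y
      rw [hrlam] at this
      exact EReal.coe_le_coe_iff.1 this
    have h2 : S ≤ ⟪lam, y⟫ := hLB lam y hyC
    have hfyS : ft y = S - r := by rw [hfy, ← hSr]
    have hkey2 : ⟪lam, y⟫ = S := by linarith
    have hkey1 : r = ⟪lam, y⟫ - ft y := by linarith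
    constructor
    · intro p
      rw [hrlam]
      have heq : (r : EReal) + ((⟪y, p - lam⟫ : ℝ) : EReal) =
          ((⟪p, y⟫ - ft y : ℝ) : EReal) := by
        rw [← EReal.coe_add]
        congr 1
        rw [inner_sub_right]
        linarith [real_inner_comm y p, real_inner_comm y lam, hkey1]
      rw [heq]
      exact hFY p y
    · -- membership in the sum of hulls of argmin sets
      rw [hCdecomp] at hyC
      obtain ⟨w, hw, hyeq⟩ := hyC
      obtain ⟨g, hg, hweq⟩ := (Set.mem_fintype_sum _ _).1 hw
      have hy2 : y = (N : ℝ)⁻¹ • ∑ i, g i := by rw [← hyeq, hweq]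
      have hinnery : ⟪lam, y⟫ = (N : ℝ)⁻¹ * ∑ i, ⟪lam, g i⟫ := by
        rw [hy2, hinner_smul_sum]
      have hge : ∀ i : Fin N, Phi i lam ≤ ⟪lam, g i⟫ :=
        fun i => hPhi_lb i lam _ (hg i)
      have hsum_eq : ∑ i, ⟪lam, g i⟫ = ∑ i, Phi i lam := by
        have h := hkey2
        rw [hinnery, hSdef] at h
        exact mul_left_cancel₀ (inv_ne_zero hNne) h
      have heach : ∀ i : Fin N, ⟪lam, g i⟫ = Phi i lam := by
        by_contra hcon
        push_neg at hcon
        obtain ⟨i₀, hne⟩ := hcon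
        have hlt : ∑ i, Phi i lam < ∑ i, ⟪lam, g i⟫ := by
          apply Finset.sum_lt_sum (fun i _ => hge i)
          exact ⟨i₀, Finset.mem_univ _, lt_of_le_of_ne (hge i₀) (fun h => hne h.symm)⟩
        rw [hsum_eq] at hlt
        exact lt_irrefl _ hlt
      have hface : ∀ i : Fin N, g i ∈ convexHull ℝ
          {yi : PiLp 2 E | yi ∈ Set.range (gt i) ∧
            ∀ z ∈ Set.range (gt i), ⟪lam, yi⟫ ≤ ⟪lam, z⟫} := by
        intro i
        rw [hMi_eq i]
        apply mem_convexHull_face _ (hg i) (le_of_eq (heach i))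
        rintro z ⟨xi, rfl⟩
        exact hPhi_le i lam xi
      rw [hy2]
      exact Set.smul_mem_smul_set
        (Set.finset_sum_mem_finset_sum Finset.univ _ _ fun i _ => hface i)
  · -- backward direction
    rintro ⟨hsub, hmem⟩
    obtain ⟨w, hw, hyeq⟩ := hmem
    obtain ⟨g, hg, hweq⟩ := (Set.mem_fintype_sum _ _).1 hw
    have hy2 : y = (N : ℝ)⁻¹ • ∑ i, g i := by rw [← hyeq, hweq]
    have hgPhi : ∀ i : Fin N, ⟪lam, g i⟫ = Phi i lam := by
      intro i
      have hgi := hg i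
      rw [hMi_eq i] at hgi
      have hub : ⟪lam, g i⟫ ≤ Phi i lam := by
        have hsub1 : convexHull ℝ {z : PiLp 2 E | z ∈ Set.range (gt i) ∧
            ⟪lam, z⟫ ≤ Phi i lam} ⊆ {z : PiLp 2 E | ⟪lam, z⟫ ≤ Phi i lam} :=
          convexHull_min (fun z hz => hz.2)
            (convex_halfSpace_le (isLinearMap_inner lam) (Phi i lam))
        exact hsub1 hgi
      have hlb : Phi i lam ≤ ⟪lam, g i⟫ := by
        apply hPhi_lb i lam
        exact convexHull_mono (fun z hz => hz.1) hgi
      exact le_antisymm hub hlb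
    have hginA : ∀ i : Fin N, g i ∈ convexHull ℝ (Set.range (gt i)) := by
      intro i
      have hgi := hg i
      rw [hMi_eq i] at hgi
      exact convexHull_mono (fun z hz => hz.1) hgi
    have hyC : y ∈ C := by
      rw [hCdecomp, hy2]
      exact Set.smul_mem_smul_set
        (Set.finset_sum_mem_finset_sum Finset.univ _ _ fun i _ => hginA i)
    have hinner_eq : ⟪lam, y⟫ = S := by
      rw [hy2, hinner_smul_sum, hSdef]
      congr 1
      exact Finset.sum_congr rfl fun i _ => hgPhi i
    refine ⟨hyC, ?_⟩
    apply le_antisymm _ (hJr_le y hyC)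
    apply le_of_forall_lt
    intro t ht
    obtain ⟨ν, c', hm1, hm2⟩ := exists_affine_minorant hft_lsc hft_cv ht
    have h1 : fstar ν ≤ (c' : EReal) := hFle ν c' hm1
    have h2 := hsub ν
    rw [hrlam] at h2
    have h2' : ((r + ⟪y, ν - lam⟫ : ℝ) : EReal) ≤ fstar ν := by
      rw [EReal.coe_add]
      exact h2
    have h4 : r + ⟪y, ν - lam⟫ ≤ c' := EReal.coe_le_coe_iff.1 (h2'.trans h1)
    have h5 : ⟪y, ν - lam⟫ = ⟪ν, y⟫ - ⟪lam, y⟫ := by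
      rw [inner_sub_right]
      linarith [real_inner_comm y ν, real_inner_comm y lam]
    rw [h5] at h4
    have h6 := hSr
    linarith
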